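/- Let R be a nonnegative integrable real-valued random variable on a probability space with E[R] > 0, let W > 0 and ζ > 0 be real constants, define Ψ(λ) := E[(W·R − λ)^+] and g(x) := E[W·R·1{W·R ≥ x}] / (P(W·R ≥ x) + ζ) for x ≥ 0, and let λ* be the unique positive solution of Ψ(λ) = ζ·λ. Then: (i) g(x) ≤ λ* for every x ≥ 0; (ii) x ≤ g(x) for every x ∈ [0, λ*]. Consequently, for any starting point λ_0 ∈ [0, λ*], the iteration λ_{t+1} = g(λ_t) produces a nondecreasing sequence bounded above by λ*, which therefore converges to a limit in [λ_0, λ*]. -/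

import Mathlib

open MeasureTheory Filter

/-- Convergence of the fixed-point iteration for the maximum throughput: with
`Ψ(λ) := E[(W·R − λ)⁺]`, `g(x) := E[W·R·1{W·R ≥ x}] / (P(W·R ≥ x) + ζ)` and `λ*` the
unique positive solution of `Ψ(λ) = ζ·λ`, one has (i) `g(x) ≤ λ*` for every `x ≥ 0`,
(ii) `x ≤ g(x)` for every `x ∈ [0, λ*]`; consequently, any iteration sequence
`λ_{t+1} = g(λ_t)` started at `λ₀ ∈ [0, λ*]` is nondecreasing, bounded above by `λ*`,
and converges to a limit in `[λ₀, λ*]`. -/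
theorem fixed_point_iteration_converges {Ω : Type*} [MeasurableSpace Ω]
    (P : Measure Ω) [IsProbabilityMeasure P]
    (R : Ω → ℝ) (hmeas : Measurable R) (hint : Integrable R P) (hpos : ∀ ω, 0 ≤ R ω)
    (hER : 0 < ∫ ω, R ω ∂P)
    (W ζ : ℝ) (hW : 0 < W) (hζ : 0 < ζ)
    (Ψ : ℝ → ℝ) (hΨ : ∀ l, Ψ l = ∫ ω, max (W * R ω - l) 0 ∂P)
    (g : ℝ → ℝ)
    (hg : ∀ x, g x = (∫ ω, Set.indicator {ω' | x ≤ W * R ω'} (fun ω' => W * R ω') ω ∂P) /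
      ((P {ω | x ≤ W * R ω}).toReal + ζ))
    (lstar : ℝ) (hlstar : 0 < lstar) (hsol : Ψ lstar = ζ * lstar) :
    (∀ x : ℝ, 0 ≤ x → g x ≤ lstar) ∧
    (∀ x : ℝ, 0 ≤ x → x ≤ lstar → x ≤ g x) ∧
    (∀ seq : ℕ → ℝ, 0 ≤ seq 0 → seq 0 ≤ lstar → (∀ n, seq (n + 1) = g (seq n)) →
      Monotone seq ∧ (∀ n, seq n ≤ lstar) ∧
        ∃ L : ℝ, seq 0 ≤ L ∧ L ≤ lstar ∧ Tendsto seq atTop (nhds L)) := by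
  have hWR : Integrable (fun ω => W * R ω) P := hint.const_mul W
  have hS : ∀ x : ℝ, MeasurableSet {ω | x ≤ W * R ω} := fun x =>
    measurableSet_le measurable_const (hmeas.const_mul W)
  have hInd : ∀ x : ℝ,
      Integrable (fun ω => Set.indicator {ω' | x ≤ W * R ω'} (fun ω' => W * R ω') ω) P :=
    fun x => hWR.indicator (hS x)
  have hPP : ∀ l : ℝ, Integrable (fun ω => max (W * R ω - l) 0) P := fun l =>
    ((hWR.sub (integrable_const l)).pos_part)
  have hden : ∀ x : ℝ, 0 < (P {ω | x ≤ W * R ω}).toReal + ζ := fun x => by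
    have := ENNReal.toReal_nonneg (a := P {ω | x ≤ W * R ω}); linarith
  have hconst : ∀ x c : ℝ,
      (∫ ω, Set.indicator {ω' | x ≤ W * R ω'} (fun _ => c) ω ∂P)
        = (P {ω | x ≤ W * R ω}).toReal * c := by
    intro x c
    rw [integral_indicator (hS x), setIntegral_const, smul_eq_mul]
    rfl
  -- key identity : A(x) = Ψ(x) + p(x) * x
  have hkey : ∀ x : ℝ,
      (∫ ω, Set.indicator {ω' | x ≤ W * R ω'} (fun ω' => W * R ω') ω ∂P)
        = Ψ x + (P {ω | x ≤ W * R ω}).toReal * x := by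
    intro x
    have hpt : ∀ ω, Set.indicator {ω' | x ≤ W * R ω'} (fun ω' => W * R ω') ω
        = max (W * R ω - x) 0 + Set.indicator {ω' | x ≤ W * R ω'} (fun _ => x) ω := by
      intro ω
      simp only [Set.indicator_apply, Set.mem_setOf_eq]
      by_cases h : x ≤ W * R ω
      · rw [if_pos h, if_pos h, max_eq_left (sub_nonneg.mpr h)]; ring
      · rw [if_neg h, if_neg h,
          max_eq_right (sub_nonpos.mpr (le_of_lt (lt_of_not_ge h)))]; ring
    simp only [hpt]
    rw [integral_add (hPP x) ((integrable_const x).indicator (hS x)),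
      hconst, hΨ]
  -- (i)
  have part1 : ∀ x : ℝ, g x ≤ lstar := by
    intro x
    have hpt2 : ∀ ω, Set.indicator {ω' | x ≤ W * R ω'} (fun ω' => W * R ω') ω
        ≤ max (W * R ω - lstar) 0 + Set.indicator {ω' | x ≤ W * R ω'} (fun _ => lstar) ω := by
      intro ω
      simp only [Set.indicator_apply, Set.mem_setOf_eq]
      by_cases h : x ≤ W * R ω
      · rw [if_pos h, if_pos h]
        have : W * R ω - lstar ≤ max (W * R ω - lstar) 0 := le_max_left _ _
        linarith
      · rw [if_neg h, if_neg h]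
        have : (0:ℝ) ≤ max (W * R ω - lstar) 0 := le_max_right _ _
        linarith
    have hA : (∫ ω, Set.indicator {ω' | x ≤ W * R ω'} (fun ω' => W * R ω') ω ∂P)
        ≤ ∫ ω, (max (W * R ω - lstar) 0
            + Set.indicator {ω' | x ≤ W * R ω'} (fun _ => lstar) ω) ∂P :=
      integral_mono (hInd x)
        ((hPP lstar).add ((integrable_const lstar).indicator (hS x))) hpt2
    rw [integral_add (hPP lstar) ((integrable_const lstar).indicator (hS x)),
      hconst, ← hΨ, hsol, hkey x] at hA
    rw [hg x, div_le_iff₀ (hden x), hkey x]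
    have hp := ENNReal.toReal_nonneg (a := P {ω | x ≤ W * R ω})
    nlinarith
  -- (ii)
  have part2 : ∀ x : ℝ, 0 ≤ x → x ≤ lstar → x ≤ g x := by
    intro x hx0 hxl
    have hΨx : ζ * lstar ≤ Ψ x := by
      rw [← hsol, hΨ, hΨ]
      refine integral_mono (hPP lstar) (hPP x) fun ω => ?_
      exact max_le_max (sub_le_sub_left hxl _) le_rfl
    rw [hg x, le_div_iff₀ (hden x), hkey x]
    have hζx : ζ * x ≤ ζ * lstar := mul_le_mul_of_nonneg_left hxl hζ.le
    nlinarith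
  refine ⟨fun x _ => part1 x, part2, fun seq h0 h0l hrec => ?_⟩
  have hb : ∀ n, 0 ≤ seq n ∧ seq n ≤ lstar := by
    intro n
    induction n with
    | zero => exact ⟨h0, h0l⟩
    | succ n ih =>
      rw [hrec n]
      exact ⟨le_trans ih.1 (part2 _ ih.1 ih.2), part1 _⟩
  have hmono : Monotone seq := by
    apply monotone_nat_of_le_succ
    intro n
    rw [hrec n]
    exact part2 _ (hb n).1 (hb n).2
  have hbdd : BddAbove (Set.range seq) := ⟨lstar, by rintro y ⟨n, rfl⟩; exact (hb n).2⟩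
  refine ⟨hmono, fun n => (hb n).2, ⨆ n, seq n, le_ciSup hbdd 0,
    ciSup_le fun n => (hb n).2, tendsto_atTop_ciSup hmono hbdd⟩
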